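/- If 0 < R < 1/((1+σ²)·2·ln(2)), then the limiting potential φ_R has a unique global minimum on [0,1] at E = 0; that is, φ_R(E) > φ_R(0) for every E ∈ (0,1]. -/

import Mathlib

open MeasureTheory ProbabilityTheory Filter Finset Real

noncomputable section

/-- Product of `B` i.i.d. standard Gaussians on `Fin B → ℝ` (law of `z`). -/
def stdGauss (B : ℕ) : Measure (Fin B → ℝ) :=
  Measure.pi fun _ => gaussianReal 0 1

/-- The `j`-th standard basis vector of `ℝ^B` (a section). -/
def basisVec (B : ℕ) (j : Fin B) : Fin B → ℝ := fun k => if k = j then 1 else 0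

/-- The MMSE denoiser `f_i(Σ)` of the effective Gaussian channel. -/
def denoiser (B : ℕ) (Sn : ℝ) (s z : Fin B → ℝ) (i : Fin B) : ℝ :=
  (1 + ∑ k ∈ Finset.univ.erase i,
      Real.exp ((s k - s i) * Real.logb 2 B / Sn ^ 2 +
        (z k - z i) * Real.sqrt (Real.logb 2 B) / Sn))⁻¹

/-- `E_{s,z}[ ∑_{i=1}^B (f_i(Σ) - s_i)^2 ]`, with `s` uniform over the basis vectors
and `z` i.i.d. standard Gaussian: the MMSE of the effective `B`-dimensional channel. -/
def mmseB (B : ℕ) (Sn : ℝ) : ℝ :=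
  (B : ℝ)⁻¹ * ∑ j : Fin B,
    ∫ z, (∑ i, (denoiser B Sn (basisVec B j) z i - basisVec B j i) ^ 2) ∂ stdGauss B

/-- Effective noise `Σ(E) = √(R(σ² + E))`. -/
def sigU (R σ2 E : ℝ) : ℝ := Real.sqrt (R * (σ2 + E))

/-- State evolution operator of the underlying system. -/
def Tu (B : ℕ) (R σ2 E : ℝ) : ℝ := mmseB B (sigU R σ2 E)

/-- Energy term of the underlying potential. -/
def Uu (R σ2 E : ℝ) : ℝ :=
  (1 / (2 * R)) * Real.logb 2 ((σ2 + E) * Real.exp (-(E / (σ2 + E))))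

/-- Entropy term of the underlying potential,
`S_u(Σ) = E_z[log_B(1 + ∑_{i=2}^B e_i(Σ))]`. -/
def Su (B : ℕ) (Sn : ℝ) : ℝ :=
  if h : 0 < B then
    letI : NeZero B := ⟨h.ne'⟩
    ∫ z, Real.logb B (1 + ∑ i ∈ Finset.univ.erase (0 : Fin B),
        Real.exp ((z i - z 0) * Real.sqrt (Real.logb 2 B) / Sn -
          Real.logb 2 B / Sn ^ 2)) ∂ stdGauss B
  else 0

/-- Potential of the underlying system. -/
def Fu (B : ℕ) (R σ2 E : ℝ) : ℝ := Uu R σ2 E - Su B (sigU R σ2 E)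

/-- The MSE floor `E₀ = lim_t T_u^{(t)}(0)`. -/
def mseFloor (B : ℕ) (R σ2 : ℝ) : ℝ :=
  limUnder atTop fun t : ℕ => (Tu B R σ2)^[t] 0

/-- Basin of attraction `𝒱₀` of the MSE floor. -/
def basin (B : ℕ) (R σ2 : ℝ) : Set ℝ :=
  {E | E ∈ Set.Icc (0:ℝ) 1 ∧
    Tendsto (fun t : ℕ => (Tu B R σ2)^[t] E) atTop (nhds (mseFloor B R σ2))}

/-- Free energy gap `ΔF_u` (`+∞` if the complement of the basin is empty). -/
def gapFu (B : ℕ) (R σ2 : ℝ) : EReal :=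
  ⨅ E ∈ Set.Icc (0:ℝ) 1 \ basin B R σ2,
    ((Fu B R σ2 E - Fu B R σ2 (mseFloor B R σ2) : ℝ) : EReal)

/-- Potential threshold `R_pot`. -/
def Rpot (B : ℕ) (σ2 : ℝ) : ℝ :=
  sSup {R : ℝ | 0 < R ∧ 0 < gapFu B R σ2}

/-- Effective noise `Σ_c(E)` of block `c` in the coupled system. -/
def sigC (R σ2 : ℝ) (Γ : ℕ) (J : Fin Γ → Fin Γ → ℝ) (E : Fin Γ → ℝ) (c : Fin Γ) : ℝ :=
  (Real.sqrt ((Γ : ℝ)⁻¹ * ∑ r, J r c / (R * (σ2 + E r))))⁻¹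

/-- Coupled state evolution operator `[T_c(E)]_r`. -/
def Tc (B : ℕ) (R σ2 : ℝ) (Γ : ℕ) (J : Fin Γ → Fin Γ → ℝ) (E : Fin Γ → ℝ) (r : Fin Γ) : ℝ :=
  (Γ : ℝ)⁻¹ * ∑ c, J r c * mmseB B (sigC R σ2 Γ J E c)

/-- Coupled potential `F_c`. -/
def Fc (B : ℕ) (R σ2 : ℝ) (Γ : ℕ) (J : Fin Γ → Fin Γ → ℝ) (E : Fin Γ → ℝ) : ℝ :=
  (∑ r, Uu R σ2 (E r)) - ∑ c, Su B (sigC R σ2 Γ J E c)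

/-- Shift operator: `[S(E)]_1 = E₀`, `[S(E)]_r = E_{r-1}` (0-based indexing). -/
def shiftProf (Γ : ℕ) (E0v : ℝ) (E : Fin Γ → ℝ) (r : Fin Γ) : ℝ :=
  if r.1 = 0 then E0v else E ⟨r.1 - 1, lt_of_le_of_lt (Nat.sub_le _ _) r.isLt⟩

/-- Partial derivative of a function of a profile with respect to coordinate `r`. -/
def pderiv (Γ : ℕ) (F : (Fin Γ → ℝ) → ℝ) (r : Fin Γ) (P : Fin Γ → ℝ) : ℝ :=
  deriv (fun x => F (Function.update P r x)) (P r)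

/-- Coupled SE operator with the pinning condition enforced on
`A = {1,…,3w} ∪ {Γ-3w+1,…,Γ}` (in 0-based indexing: `r < 3w` or `r ≥ Γ-3w`). -/
def TcPin (B : ℕ) (R σ2 : ℝ) (Γ w : ℕ) (J : Fin Γ → Fin Γ → ℝ) (E : Fin Γ → ℝ) (r : Fin Γ) : ℝ :=
  if r.1 < 3*w ∨ Γ - 3*w ≤ r.1 then 0 else Tc B R σ2 Γ J E r

/-- All-ones initial profile, pinned to `0` on the pinning set `A`. -/
def onesPin (Γ w : ℕ) : Fin Γ → ℝ :=
  fun r => if r.1 < 3*w ∨ Γ - 3*w ≤ r.1 then 0 else 1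

/-- Large section size (`B → ∞`) limit of the underlying potential. -/
def phiLim (R σ2 E : ℝ) : ℝ :=
  (1/(2*R)) * Real.logb 2 ((σ2 + E) * Real.exp (-(E/(σ2+E)))) -
    max 0 (1 - 1/(2 * Real.log 2 * R * (σ2 + E)))

/-- for `R < 1/((1+σ²)·2·ln 2)` the limiting potential has its unique
global minimum on `[0,1]` at `E = 0`. -/
theorem phiLim_unique_min_at_zero
    (R σ2 : ℝ) (hσ2 : 0 < σ2) (hR : 0 < R)
    (hRsmall : R < 1 / ((1 + σ2) * (2 * Real.log 2))) :
    ∀ E ∈ Set.Ioc (0:ℝ) 1, phiLim R σ2 0 < phiLim R σ2 E := by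
  intro E hE
  obtain ⟨hE0, hE1⟩ := hE
  have hlog2 : (0:ℝ) < Real.log 2 := Real.log_pos (by norm_num)
  -- the max terms vanish
  have hden : ∀ x : ℝ, 0 < x → x ≤ 1 + σ2 → 1 - 1/(2 * Real.log 2 * R * x) ≤ 0 := by
    intro x hx hxle
    have hpos : 0 < 2 * Real.log 2 * R * x := by positivity
    rw [sub_nonpos, le_div_iff₀ hpos, one_mul]
    have h1 : R * ((1 + σ2) * (2 * Real.log 2)) < 1 := by
      have := (lt_div_iff₀ (by positivity)).mp hRsmall
      linarith
    nlinarith [mul_le_mul_of_nonneg_left hxle (by positivity : (0:ℝ) ≤ 2 * Real.log 2 * R)]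
  have hmax0 : max 0 (1 - 1/(2 * Real.log 2 * R * (σ2 + 0))) = 0 :=
    max_eq_left (hden _ (by linarith) (by linarith))
  have hmaxE : max 0 (1 - 1/(2 * Real.log 2 * R * (σ2 + E))) = 0 :=
    max_eq_left (hden _ (by linarith) (by linarith))
  have hsE : 0 < σ2 + E := by linarith
  -- key log inequality
  have hkey : Real.log σ2 < Real.log (σ2 + E) + (-(E/(σ2+E))) := by
    have hy : (0:ℝ) < σ2 / (σ2 + E) := by positivity
    have hyne : σ2 / (σ2 + E) ≠ 1 := by
      intro h
      have := (div_eq_one_iff_eq hsE.ne').mp h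
      linarith
    have h := Real.log_lt_sub_one_of_pos hy hyne
    rw [Real.log_div hσ2.ne' hsE.ne'] at h
    have : σ2 / (σ2 + E) - 1 = -(E/(σ2+E)) := by field_simp; ring
    linarith [this ▸ h]
  have hlt : σ2 < (σ2 + E) * Real.exp (-(E/(σ2+E))) := by
    have h2 : Real.log σ2 < Real.log ((σ2 + E) * Real.exp (-(E/(σ2+E)))) := by
      rw [Real.log_mul hsE.ne' (Real.exp_pos _).ne', Real.log_exp]
      exact hkey
    have := Real.exp_lt_exp.mpr h2
    rwa [Real.exp_log hσ2, Real.exp_log (by positivity)] at this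
  have hlogb : Real.logb 2 ((σ2 + 0) * Real.exp (-(0/(σ2+0)))) <
      Real.logb 2 ((σ2 + E) * Real.exp (-(E/(σ2+E)))) := by
    have h0 : (σ2 + 0) * Real.exp (-(0/(σ2+0))) = σ2 := by
      simp
    rw [h0]
    exact Real.logb_lt_logb (by norm_num) hσ2 hlt
  unfold phiLim
  rw [hmax0, hmaxE]
  have h2R : (0:ℝ) < 1/(2*R) := by positivity
  nlinarith [mul_lt_mul_of_pos_left hlogb h2R]
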